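/- Let X = {0,1,2}^ℕ with metric d_θ, θ ∈ (0,1), and let Φ : X → ℝ² be the potential defined by: Φ(ξ) = w₀ if ξ ∈ X₀(λ); Φ(ξ) = u_{l−λ} if ξ ∈ X(l) \ C_{l−1}(1^{l−1}) with l > λ; Φ(ξ) = v_{l−λ} if ξ ∈ X(l) ∩ C_{l−1}(1^{l−1}) with l > λ; Φ(ξ) = w_∞ if ξ ∈ X(∞). Then Φ is Lipschitz continuous with Lipschitz constant max{C₁θ^{−λ}, 2Cθ^{−λ}}, where C₁ = sup{‖u−v‖ : u,v ∈ Φ(X)}. -/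

import Mathlib

open scoped Classical ENNReal NNReal

open MeasureTheory

/-- The shift map on the one-sided full shift `{0,1,2}^ℕ`. -/
def shiftMap (ξ : ℕ → Fin 3) : ℕ → Fin 3 := fun k => ξ (k + 1)

/-- The metric `d_θ(ξ,η) = θ^{min{k ≥ 1 : ξ_k ≠ η_k}}` (indexing from `1`). -/
noncomputable def dtheta (θ : ℝ) (ξ η : ℕ → Fin 3) : ℝ :=
  if hne : ξ = η then 0 else θ ^ (Nat.find (Function.ne_iff.mp hne) + 1)

/-- Euclidean norm on `ℝ²`. -/
noncomputable def enorm2 (p : ℝ × ℝ) : ℝ := Real.sqrt (p.1 ^ 2 + p.2 ^ 2)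

/-- `u_k = (x_k, 0)`. -/
noncomputable def useq (x : ℕ → ℝ) (k : ℕ) : ℝ × ℝ := (x k, 0)

/-- `v_k = (x_k, h(x_k))`. -/
noncomputable def vseq (x : ℕ → ℝ) (h : ℝ → ℝ) (k : ℕ) : ℝ × ℝ := (x k, h (x k))

/-- `w_k = (λ·w₀ + Σ_{j=1}^k v_j)/(k+λ)` with `w₀ = (a,0)`; note `w_0 = (a,0)`. -/
noncomputable def wseq (a : ℝ) (lam : ℕ) (x : ℕ → ℝ) (h : ℝ → ℝ) (k : ℕ) : ℝ × ℝ :=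
  ((k + lam : ℝ))⁻¹ • ((lam : ℝ) • ((a : ℝ), (0 : ℝ)) + ∑ j ∈ Finset.Icc 1 k, vseq x h j)

/-- The potential `Φ` of Example 1 (sequences indexed from `1`, so a sequence `ξ` lies in
`X(l)` iff the first occurrence of the symbol `2` is at (0-based) index `l - 1`):
`Φ = w₀` on `X₀(λ) = X(1) ∪ ⋯ ∪ X(λ)`; for `l > λ`, `Φ = v_{l-λ}` on
`X(l) ∩ C_{l-1}(1^{l-1})` and `Φ = u_{l-λ}` on `X(l) \ C_{l-1}(1^{l-1})`;
and `Φ = w_∞` on `X(∞) = {0,1}^ℕ`. -/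
noncomputable def Phi (lam : ℕ) (u v : ℕ → ℝ × ℝ) (w0 winf : ℝ × ℝ)
    (ξ : ℕ → Fin 3) : ℝ × ℝ :=
  if hex : ∃ k, ξ k = 2 then
    let l := Nat.find hex + 1
    if l ≤ lam then w0
    else if ∀ i < l - 1, ξ i = 1 then v (l - lam) else u (l - lam)
  else winf

/-- The periodic point measure `μ_x = (1/n)(δ_x + ⋯ + δ_{f^{n-1}x})`. -/
noncomputable def pmeasure (n : ℕ) (x : ℕ → Fin 3) : Measure (ℕ → Fin 3) :=
  ((n : ℝ≥0∞))⁻¹ • ∑ i ∈ Finset.range n, Measure.dirac (shiftMap^[i] x)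

/-- The periodic point `ξ^k = O(1^{k+λ-1} 2)` of period `k+λ`. -/
def xiseq (lam k : ℕ) : ℕ → Fin 3 :=
  fun i => if i % (k + lam) = k + lam - 1 then 2 else 1

lemma enorm2_eq_abs (p : ℝ × ℝ) : enorm2 p = ‖(⟨p.1, p.2⟩ : ℂ)‖ := by
  rw [enorm2, Complex.norm_def, Complex.normSq_mk]
  congr 1; ring

lemma enorm2_sub_le (p q : ℝ × ℝ) : enorm2 (p - q) ≤ enorm2 p + enorm2 q := by
  rw [enorm2_eq_abs, enorm2_eq_abs, enorm2_eq_abs]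
  have hc : (⟨(p - q).1, (p - q).2⟩ : ℂ) = ⟨p.1, p.2⟩ - ⟨q.1, q.2⟩ := by
    simp [Complex.ext_iff]
  rw [hc]
  exact norm_sub_le _ _

lemma enorm2_nonneg (p : ℝ × ℝ) : 0 ≤ enorm2 p := Real.sqrt_nonneg _

lemma Phi_pos (lam : ℕ) (u v : ℕ → ℝ × ℝ) (w0 winf : ℝ × ℝ) (ξ : ℕ → Fin 3)
    (hex : ∃ k, ξ k = 2) :
    Phi lam u v w0 winf ξ =
      if Nat.find hex + 1 ≤ lam then w0
      else if ∀ i < Nat.find hex + 1 - 1, ξ i = 1 then v (Nat.find hex + 1 - lam)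
      else u (Nat.find hex + 1 - lam) := by
  unfold Phi
  rw [dif_pos hex]

lemma Phi_neg (lam : ℕ) (u v : ℕ → ℝ × ℝ) (w0 winf : ℝ × ℝ) (ξ : ℕ → Fin 3)
    (hex : ¬∃ k, ξ k = 2) : Phi lam u v w0 winf ξ = winf := by
  unfold Phi
  rw [dif_neg hex]

/-- the potential `Φ` is Lipschitz continuous with respect to `d_θ`, with
Lipschitz constant `max{C₁ θ^{-λ}, 2C θ^{-λ}}`, where `C₁ = sup{‖u-v‖ : u,v ∈ Φ(X)}`. -/
theorem stmt_13 (a b : ℝ) (ha : 0 < a) (hb : 0 < b) (lam : ℕ) (hlam : 3 ≤ lam)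
    (h : ℝ → ℝ) (hmono : StrictMonoOn h (Set.Icc 0 a))
    (hconc : StrictConcaveOn ℝ (Set.Icc 0 a) h)
    (hcont : ContinuousOn h (Set.Icc 0 a)) (h0 : h 0 = 0) (hab : h a = b)
    (θ C : ℝ) (hθ : θ ∈ Set.Ioo (0 : ℝ) 1) (hC : 0 < C)
    (x : ℕ → ℝ) (hx : ∀ k, 1 ≤ k → x k ∈ Set.Ioo 0 a)
    (hanti : StrictAntiOn x (Set.Ici 1))
    (hnorm : ∀ k, 1 ≤ k → enorm2 (vseq x h k) < C * θ ^ k) :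
    ∀ ξ η : ℕ → Fin 3,
      enorm2 (Phi lam (useq x) (vseq x h) (a, 0) (0, 0) ξ -
          Phi lam (useq x) (vseq x h) (a, 0) (0, 0) η) ≤
        max ((sSup {r : ℝ | ∃ ζ ζ' : ℕ → Fin 3,
            r = enorm2 (Phi lam (useq x) (vseq x h) (a, 0) (0, 0) ζ -
              Phi lam (useq x) (vseq x h) (a, 0) (0, 0) ζ')}) * θ ^ (-(lam : ℤ)))
          (2 * C * θ ^ (-(lam : ℤ))) * dtheta θ ξ η := by
  obtain ⟨hθ0, hθ1⟩ := hθ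
  set Φ := Phi lam (useq x) (vseq x h) (a, 0) (0, 0) with hΦ
  -- the u-seq also satisfies the norm bound
  have hu : ∀ k, 1 ≤ k → enorm2 (useq x k) < C * θ ^ k := by
    intro k hk
    refine lt_of_le_of_lt ?_ (hnorm k hk)
    simp only [enorm2, useq, vseq]
    apply Real.sqrt_le_sqrt
    nlinarith [sq_nonneg (h (x k))]
  have hCθ : ∀ k, 1 ≤ k → C * θ ^ k ≤ C * θ := by
    intro k hk
    have : θ ^ k ≤ θ ^ 1 := pow_le_pow_of_le_one hθ0.le hθ1.le hk
    have := mul_le_mul_of_nonneg_left this hC.le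
    simpa using this
  -- all values of Φ are bounded in norm
  have hval : ∀ ζ, enorm2 (Φ ζ) ≤ max a (C * θ) := by
    intro ζ
    by_cases hex : ∃ k, ζ k = 2
    · rw [hΦ, Phi_pos lam _ _ _ _ ζ hex]
      by_cases h1 : Nat.find hex + 1 ≤ lam
      · rw [if_pos h1]
        have : enorm2 ((a : ℝ), (0 : ℝ)) = a := by
          simp [enorm2, Real.sqrt_sq ha.le]
        rw [this]; exact le_max_left _ _
      · rw [if_neg h1]
        have hk1 : 1 ≤ Nat.find hex + 1 - lam := by omega
        split_ifs
        · exact le_trans (le_trans (hnorm _ hk1).le (hCθ _ hk1)) (le_max_right _ _)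
        · exact le_trans (le_trans (hu _ hk1).le (hCθ _ hk1)) (le_max_right _ _)
    · rw [hΦ, Phi_neg lam _ _ _ _ ζ hex]
      have : enorm2 ((0 : ℝ), (0 : ℝ)) = 0 := by simp [enorm2]
      rw [this]; exact le_trans ha.le (le_max_left _ _)
  set S := {r : ℝ | ∃ ζ ζ' : ℕ → Fin 3, r = enorm2 (Φ ζ - Φ ζ')} with hS
  have hS_bdd : BddAbove S := by
    refine ⟨2 * max a (C * θ), ?_⟩
    rintro r ⟨ζ, ζ', rfl⟩
    calc enorm2 (Φ ζ - Φ ζ') ≤ enorm2 (Φ ζ) + enorm2 (Φ ζ') := enorm2_sub_le _ _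
      _ ≤ max a (C * θ) + max a (C * θ) := add_le_add (hval ζ) (hval ζ')
      _ = 2 * max a (C * θ) := by ring
  set D := sSup S with hD
  have hD0 : 0 ≤ D := by
    refine le_csSup hS_bdd ⟨fun _ => 0, fun _ => 0, ?_⟩
    simp [enorm2]
  intro ξ η
  have hle_D : enorm2 (Φ ξ - Φ η) ≤ D := le_csSup hS_bdd ⟨ξ, η, rfl⟩
  by_cases hne : ξ = η
  · subst hne
    rw [dtheta, dif_pos rfl, mul_zero, sub_self]
    simp [enorm2]
  · rw [dtheta, dif_neg hne]
    set n := Nat.find (Function.ne_iff.mp hne) with hn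
    have hagree : ∀ i < n, ξ i = η i := by
      intro i hi
      have := Nat.find_min (Function.ne_iff.mp hne) hi
      exact not_ne_iff.mp this
    have hpow_pos : (0 : ℝ) < θ ^ (n + 1) := pow_pos hθ0 _
    have hz_pos : (0 : ℝ) < θ ^ (-(lam : ℤ)) := zpow_pos hθ0 _
    by_cases hcase : n + 1 ≤ lam
    · -- use the sup bound
      have h1 : (1 : ℝ) ≤ θ ^ (-(lam : ℤ)) * θ ^ (n + 1) := by
        have e : θ ^ (-(lam : ℤ)) * θ ^ (n + 1) = (θ ^ (lam - (n + 1)))⁻¹ := by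
          rw [← zpow_natCast θ (n + 1), ← zpow_add₀ hθ0.ne',
            ← zpow_natCast θ (lam - (n + 1)), ← zpow_neg]
          congr 1; omega
        rw [e]
        rw [one_le_inv₀ (pow_pos hθ0 _)]
        exact pow_le_one₀ hθ0.le hθ1.le
      calc enorm2 (Φ ξ - Φ η) ≤ D := hle_D
        _ = D * 1 := by ring
        _ ≤ D * (θ ^ (-(lam : ℤ)) * θ ^ (n + 1)) := mul_le_mul_of_nonneg_left h1 hD0
        _ = D * θ ^ (-(lam : ℤ)) * θ ^ (n + 1) := by ring
        _ ≤ max (D * θ ^ (-(lam : ℤ))) (2 * C * θ ^ (-(lam : ℤ))) * θ ^ (n + 1) :=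
            mul_le_mul_of_nonneg_right (le_max_left _ _) hpow_pos.le
    · push_neg at hcase
      have hlamn : lam ≤ n := by omega
      by_cases h2 : ∃ k < n, ξ k = 2
      · -- Φ ξ = Φ η
        obtain ⟨k, hk, hk2⟩ := h2
        have hexξ : ∃ m, ξ m = 2 := ⟨k, hk2⟩
        have hexη : ∃ m, η m = 2 := ⟨k, (hagree k hk) ▸ hk2⟩
        have hfξ : Nat.find hexξ < n := lt_of_le_of_lt (Nat.find_le hk2) hk
        have hfind : Nat.find hexξ = Nat.find hexη := by
          have h1 : Nat.find hexη ≤ Nat.find hexξ := by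
            apply Nat.find_le
            rw [← hagree _ hfξ]
            exact Nat.find_spec hexξ
          have h2 : Nat.find hexξ ≤ Nat.find hexη := by
            apply Nat.find_le
            rw [hagree _ (lt_of_le_of_lt h1 hfξ)]
            exact Nat.find_spec hexη
          omega
        have hPhi_eq : Φ ξ = Φ η := by
          rw [hΦ, Phi_pos lam _ _ _ _ ξ hexξ, Phi_pos lam _ _ _ _ η hexη, ← hfind]
          have hiff : (∀ i < Nat.find hexξ + 1 - 1, ξ i = 1) ↔
              (∀ i < Nat.find hexξ + 1 - 1, η i = 1) := by
            constructor <;> intro hall i hi <;>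
              [rw [← hagree i (by omega)]; rw [hagree i (by omega)]] <;> exact hall i hi
          by_cases hc1 : Nat.find hexξ + 1 ≤ lam
          · rw [if_pos hc1, if_pos hc1]
          · rw [if_neg hc1, if_neg hc1]
            by_cases hc2 : ∀ i < Nat.find hexξ + 1 - 1, ξ i = 1
            · rw [if_pos hc2, if_pos (hiff.mp hc2)]
            · rw [if_neg hc2, if_neg (fun hcc => hc2 (hiff.mpr hcc))]
        rw [hPhi_eq, sub_self]
        have hlhs : enorm2 (0 : ℝ × ℝ) = 0 := by simp [enorm2]
        rw [hlhs]
        have : (0 : ℝ) ≤ 2 * C * θ ^ (-(lam : ℤ)) := by positivity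
        exact mul_nonneg (le_trans this (le_max_right _ _)) hpow_pos.le
      · -- both sequences have no 2 before index n : norm bound
        have hbound : ∀ ζ : ℕ → Fin 3, (∀ k < n, ζ k ≠ 2) →
            enorm2 (Φ ζ) ≤ C * θ ^ (n + 1 - lam) := by
          intro ζ hζ
          by_cases hex : ∃ k, ζ k = 2
          · have hm : n ≤ Nat.find hex :=
              le_of_not_gt fun hlt => hζ _ hlt (Nat.find_spec hex)
            rw [hΦ, Phi_pos lam _ _ _ _ ζ hex]
            rw [if_neg (by omega)]
            have hk1 : 1 ≤ Nat.find hex + 1 - lam := by omega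
            have hmn : n + 1 - lam ≤ Nat.find hex + 1 - lam := by omega
            have hle : C * θ ^ (Nat.find hex + 1 - lam) ≤ C * θ ^ (n + 1 - lam) :=
              mul_le_mul_of_nonneg_left
                (pow_le_pow_of_le_one hθ0.le hθ1.le hmn) hC.le
            split_ifs
            · exact le_trans (hnorm _ hk1).le hle
            · exact le_trans (hu _ hk1).le hle
          · rw [hΦ, Phi_neg lam _ _ _ _ ζ hex]
            have : enorm2 ((0 : ℝ), (0 : ℝ)) = 0 := by simp [enorm2]
            rw [this]
            positivity
        have hη2 : ∀ k < n, η k ≠ 2 := by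
          intro k hk
          rw [← hagree k hk]
          intro hc
          exact h2 ⟨k, hk, hc⟩
        have hξ2 : ∀ k < n, ξ k ≠ 2 := fun k hk hc => h2 ⟨k, hk, hc⟩
        have e1 : (θ : ℝ) ^ (n + 1 - lam) = θ ^ (-(lam : ℤ)) * θ ^ (n + 1) := by
          rw [← zpow_natCast θ (n + 1 - lam), ← zpow_natCast θ (n + 1),
            ← zpow_add₀ hθ0.ne']
          congr 1; omega
        calc enorm2 (Φ ξ - Φ η) ≤ enorm2 (Φ ξ) + enorm2 (Φ η) := enorm2_sub_le _ _
          _ ≤ C * θ ^ (n + 1 - lam) + C * θ ^ (n + 1 - lam) :=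
              add_le_add (hbound ξ hξ2) (hbound η hη2)
          _ = 2 * C * θ ^ (-(lam : ℤ)) * θ ^ (n + 1) := by rw [e1]; ring
          _ ≤ max (D * θ ^ (-(lam : ℤ))) (2 * C * θ ^ (-(lam : ℤ))) * θ ^ (n + 1) :=
              mul_le_mul_of_nonneg_right (le_max_right _ _) hpow_pos.le
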